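/- Fix integers n ≥ 1, m' ≥ 1, m ≥ 1, d ≥ 1 and reals L ≥ 0, γ ≥ 0, C₁ ≥ 0, C₂ ≥ 0. Let T be a finite index set with |T| = n, and for each i ∈ T let T_i be a finite set of time indices with |T_i| = m'. Let t be a distinguished time index and let {x_τ}_{τ ∈ {t} ∪ ⋃_i T_i} ⊆ ℝ^d satisfy ‖x_τ − x_{τ'}‖ ≤ γ(m−1) for all such indices τ, τ'. For each i ∈ T and τ ∈ T_i let G_{i,τ} : ℝ^d → ℝ^d be L-Lipschitz, set ḡ_i = (1/m') Σ_{τ∈T_i} G_{i,τ}(x_τ), and let g* ∈ ℝ^d with g* ≠ 0. Suppose vectors ĝ_i ∈ ℝ^d (i ∈ T) satisfy ‖ĝ_i − ḡ_i‖ ≤ C₁ · max_{τ∈T_i} ‖G_{i,τ}(x_τ) − ḡ_i‖_∞, and suppose ĝĝ ∈ ℝ^d with ĝĝ ≠ 0 satisfies ‖ĝĝ − (1/n) Σ_{i∈T} ĝ_i‖ ≤ C₂ · max_{i∈T} ‖ĝ_i − (1/n) Σ_{j∈T} ĝ_j‖_∞. Then ‖ g*/‖g*‖ − ĝĝ/‖ĝĝ‖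 ‖ ≤ (2/‖g*‖) · [ Lγ(m−1)(1 + C₁ + 2C₂(C₁+1)) + ‖ g* − (1/(m'n)) Σ_{i∈T} Σ_{τ∈T_i} G_{i,τ}(x_t) ‖ + 2C₂ max_{i∈T} ‖ (1/m') Σ_{τ∈T_i} G_{i,τ}(x_t) − g* ‖_∞ + (C₁/n) Σ_{i∈T} max_{τ,τ'∈T_i} ‖ G_{i,τ}(x_{τ'}) − G_{i,τ'}(x_{τ'}) ‖_∞ + 2C₂C₁ max_{i∈T, τ,τ'∈T_i} ‖ G_{i,τ}(x_{τ'}) − G_{i,τ'}(x_{τ'}) ‖_∞ ]. -/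

import Mathlib

/-- The sup (coordinatewise max) norm of a vector of `ℝ^d`. -/
noncomputable def supNorm {d : ℕ} (v : EuclideanSpace ℝ (Fin d)) : ℝ :=
  ‖(WithLp.equiv 2 (Fin d → ℝ)) v‖

section SupNormAux
variable {d : ℕ}

lemma supNorm_nonneg (v : EuclideanSpace ℝ (Fin d)) : 0 ≤ supNorm v := norm_nonneg _

lemma supNorm_zero : supNorm (0 : EuclideanSpace ℝ (Fin d)) = 0 := by
  simp [supNorm]

lemma supNorm_add_le (a b : EuclideanSpace ℝ (Fin d)) :
    supNorm (a + b) ≤ supNorm a + supNorm b := by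
  unfold supNorm; rw [show (WithLp.equiv 2 (Fin d → ℝ)) (a + b) = (WithLp.equiv 2 (Fin d → ℝ)) a + (WithLp.equiv 2 (Fin d → ℝ)) b from rfl]; exact norm_add_le _ _

lemma supNorm_neg (a : EuclideanSpace ℝ (Fin d)) : supNorm (-a) = supNorm a := by
  unfold supNorm
  rw [show (WithLp.equiv 2 (Fin d → ℝ)) (-a) = -((WithLp.equiv 2 (Fin d → ℝ)) a) from rfl,
    norm_neg]

lemma supNorm_sub_rev (a b : EuclideanSpace ℝ (Fin d)) :
    supNorm (a - b) = supNorm (b - a) := by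
  rw [← supNorm_neg (a - b), neg_sub]

lemma supNorm_smul (c : ℝ) (a : EuclideanSpace ℝ (Fin d)) :
    supNorm (c • a) = |c| * supNorm a := by
  unfold supNorm; rw [show (WithLp.equiv 2 (Fin d → ℝ)) (c • a) = c • (WithLp.equiv 2 (Fin d → ℝ)) a from rfl, norm_smul, Real.norm_eq_abs]

lemma supNorm_sub_le (a b c : EuclideanSpace ℝ (Fin d)) :
    supNorm (a - c) ≤ supNorm (a - b) + supNorm (b - c) := by
  have h := supNorm_add_le (a - b) (b - c)
  rwa [sub_add_sub_cancel] at h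

lemma supNorm_sum_le {α : Type*} (s : Finset α) (f : α → EuclideanSpace ℝ (Fin d)) :
    supNorm (∑ i ∈ s, f i) ≤ ∑ i ∈ s, supNorm (f i) := by
  classical
  induction s using Finset.induction with
  | empty => simp [supNorm_zero]
  | insert _ _ h ih =>
    rw [Finset.sum_insert h, Finset.sum_insert h]
    exact (supNorm_add_le _ _).trans (by linarith)

lemma supNorm_le_norm (v : EuclideanSpace ℝ (Fin d)) : supNorm v ≤ ‖v‖ := by
  unfold supNorm
  refine (pi_norm_le_iff_of_nonneg (norm_nonneg v)).mpr fun i => ?_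
  show ‖v i‖ ≤ ‖v‖
  rw [EuclideanSpace.norm_eq]
  have h1 : ‖v i‖ = Real.sqrt (‖v i‖ ^ 2) := (Real.sqrt_sq (norm_nonneg _)).symm
  rw [h1]
  apply Real.sqrt_le_sqrt
  exact Finset.single_le_sum (f := fun j => ‖v j‖ ^ 2) (fun j _ => sq_nonneg _) (Finset.mem_univ i)

lemma normalize_sub_le {E : Type*} [NormedAddCommGroup E] [NormedSpace ℝ E]
    (a b : E) (ha : a ≠ 0) (hb : b ≠ 0) :
    ‖‖a‖⁻¹ • a - ‖b‖⁻¹ • b‖ ≤ 2 / ‖a‖ * ‖a - b‖ := by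
  have hpa : (0:ℝ) < ‖a‖ := norm_pos_iff.mpr ha
  have hpb : (0:ℝ) < ‖b‖ := norm_pos_iff.mpr hb
  have key : ‖‖a‖⁻¹ • a - ‖b‖⁻¹ • b‖ ≤
      ‖‖a‖⁻¹ • a - ‖a‖⁻¹ • b‖ + ‖‖a‖⁻¹ • b - ‖b‖⁻¹ • b‖ := by
    have h := norm_add_le (‖a‖⁻¹ • a - ‖a‖⁻¹ • b) (‖a‖⁻¹ • b - ‖b‖⁻¹ • b)
    rwa [sub_add_sub_cancel] at h
  have h1 : ‖‖a‖⁻¹ • a - ‖a‖⁻¹ • b‖ = ‖a‖⁻¹ * ‖a - b‖ := by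
    rw [← smul_sub, norm_smul, Real.norm_eq_abs, abs_of_nonneg (by positivity)]
  have h2 : ‖‖a‖⁻¹ • b - ‖b‖⁻¹ • b‖ ≤ ‖a‖⁻¹ * ‖a - b‖ := by
    rw [← sub_smul, norm_smul, Real.norm_eq_abs]
    have e : ‖a‖⁻¹ - ‖b‖⁻¹ = (‖b‖ - ‖a‖) / (‖a‖ * ‖b‖) := by field_simp
    rw [e, abs_div, abs_of_pos (mul_pos hpa hpb)]
    have hb2 : |‖b‖ - ‖a‖| ≤ ‖a - b‖ := by
      have h3 := abs_norm_sub_norm_le b a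
      rwa [norm_sub_rev] at h3
    have e2 : |‖b‖ - ‖a‖| / (‖a‖ * ‖b‖) * ‖b‖ = |‖b‖ - ‖a‖| / ‖a‖ := by
      field_simp
    rw [e2]
    calc |‖b‖ - ‖a‖| / ‖a‖ ≤ ‖a - b‖ / ‖a‖ := by gcongr
      _ = ‖a‖⁻¹ * ‖a - b‖ := by ring
  calc ‖‖a‖⁻¹ • a - ‖b‖⁻¹ • b‖ ≤ ‖a‖⁻¹ * ‖a - b‖ + ‖a‖⁻¹ * ‖a - b‖ := by linarith
    _ = 2 / ‖a‖ * ‖a - b‖ := by ring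

end SupNormAux

set_option maxHeartbeats 1000000 in
/-- Deterministic error bound on the difference of normalized directions between the
true gradient `g*` and the robust aggregate `ĝĝ` of temporally robustified gradients
(Lemma 2 of the paper). -/
theorem normalized_robust_aggregate_error_bound
    {ι J : Type*}
    (n m' m d : ℕ) (hn : 1 ≤ n) (hm' : 1 ≤ m') (hm : 1 ≤ m) (hd : 1 ≤ d)
    (L γ C₁ C₂ : ℝ) (hL : 0 ≤ L) (hγ : 0 ≤ γ) (hC₁ : 0 ≤ C₁) (hC₂ : 0 ≤ C₂)
    (T : Finset ι) (hT : T.card = n)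
    (Ti : ι → Finset J) (hTi : ∀ i, (Ti i).card = m')
    (t : J) (x : J → EuclideanSpace ℝ (Fin d))
    (hx : ∀ τ τ' : J, (τ = t ∨ ∃ i ∈ T, τ ∈ Ti i) → (τ' = t ∨ ∃ i ∈ T, τ' ∈ Ti i) →
      ‖x τ - x τ'‖ ≤ γ * ((m : ℝ) - 1))
    (G : ι → J → EuclideanSpace ℝ (Fin d) → EuclideanSpace ℝ (Fin d))
    (hG : ∀ i ∈ T, ∀ τ ∈ Ti i, ∀ y z, ‖G i τ y - G i τ z‖ ≤ L * ‖y - z‖)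
    (gbar : ι → EuclideanSpace ℝ (Fin d))
    (hgbar : ∀ i, gbar i = (m' : ℝ)⁻¹ • ∑ τ ∈ Ti i, G i τ (x τ))
    (gstar : EuclideanSpace ℝ (Fin d)) (hgstar : gstar ≠ 0)
    (ghat : ι → EuclideanSpace ℝ (Fin d))
    (hghat : ∀ i ∈ T, ‖ghat i - gbar i‖ ≤
      C₁ * (Ti i).sup' (Finset.card_pos.mp (by rw [hTi i]; exact hm'))
        fun τ => supNorm (G i τ (x τ) - gbar i))
    (gg : EuclideanSpace ℝ (Fin d)) (hgg0 : gg ≠ 0)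
    (hgg : ‖gg - (n : ℝ)⁻¹ • ∑ i ∈ T, ghat i‖ ≤
      C₂ * T.sup' (Finset.card_pos.mp (by rw [hT]; exact hn))
        fun i => supNorm (ghat i - (n : ℝ)⁻¹ • ∑ j ∈ T, ghat j)) :
    ‖‖gstar‖⁻¹ • gstar - ‖gg‖⁻¹ • gg‖ ≤ (2 / ‖gstar‖) *
      (L * γ * ((m : ℝ) - 1) * (1 + C₁ + 2 * C₂ * (C₁ + 1))
      + ‖gstar - ((m' : ℝ) * (n : ℝ))⁻¹ • ∑ i ∈ T, ∑ τ ∈ Ti i, G i τ (x t)‖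
      + 2 * C₂ * T.sup' (Finset.card_pos.mp (by rw [hT]; exact hn))
          (fun i => supNorm ((m' : ℝ)⁻¹ • ∑ τ ∈ Ti i, G i τ (x t) - gstar))
      + (C₁ / (n : ℝ)) * ∑ i ∈ T,
          ((Ti i) ×ˢ (Ti i)).sup'
            ((Finset.card_pos.mp (by rw [hTi i]; exact hm')).product
              (Finset.card_pos.mp (by rw [hTi i]; exact hm')))
            (fun p => supNorm (G i p.1 (x p.2) - G i p.2 (x p.2)))
      + 2 * C₂ * C₁ * T.sup' (Finset.card_pos.mp (by rw [hT]; exact hn))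
          (fun i => ((Ti i) ×ˢ (Ti i)).sup'
            ((Finset.card_pos.mp (by rw [hTi i]; exact hm')).product
              (Finset.card_pos.mp (by rw [hTi i]; exact hm')))
            (fun p => supNorm (G i p.1 (x p.2) - G i p.2 (x p.2))))) := by
  classical
  have hTne : T.Nonempty := Finset.card_pos.mp (by rw [hT]; exact hn)
  have hTine : ∀ i, (Ti i).Nonempty := fun i => Finset.card_pos.mp (by rw [hTi i]; exact hm')
  have hm'pos : (0:ℝ) < (m' : ℝ) := by exact_mod_cast hm'
  have hnpos : (0:ℝ) < (n : ℝ) := by exact_mod_cast hn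
  have hm1 : (0:ℝ) ≤ (m:ℝ) - 1 := by
    have h : (1:ℝ) ≤ (m:ℝ) := by exact_mod_cast hm
    linarith
  set A := L * γ * ((m : ℝ) - 1) with hAdef
  have hA : 0 ≤ A := mul_nonneg (mul_nonneg hL hγ) hm1
  set D : ι → ℝ := fun i => ((Ti i) ×ˢ (Ti i)).sup' ((hTine i).product (hTine i))
      (fun p => supNorm (G i p.1 (x p.2) - G i p.2 (x p.2))) with hDdef
  set S := T.sup' hTne (fun i => supNorm ((m' : ℝ)⁻¹ • ∑ τ ∈ Ti i, G i τ (x t) - gstar))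
    with hSdef
  set Dmax := T.sup' hTne D with hDmaxdef
  have hD_le_Dmax : ∀ i ∈ T, D i ≤ Dmax := fun i hi => Finset.le_sup' D hi
  have hS_mem : ∀ i ∈ T, supNorm ((m' : ℝ)⁻¹ • ∑ τ ∈ Ti i, G i τ (x t) - gstar) ≤ S := by
    intro i hi
    rw [hSdef]
    exact Finset.le_sup' (fun i => supNorm ((m' : ℝ)⁻¹ • ∑ τ ∈ Ti i, G i τ (x t) - gstar)) hi
  have hD_nonneg : ∀ i, 0 ≤ D i := by
    intro i
    obtain ⟨τ0, hτ0⟩ := hTine i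
    rw [hDdef]
    exact le_trans (supNorm_nonneg (G i τ0 (x τ0) - G i τ0 (x τ0)))
      (Finset.le_sup' (f := fun p : J × J => supNorm (G i p.1 (x p.2) - G i p.2 (x p.2)))
        (Finset.mk_mem_product hτ0 hτ0))
  have hDmax_nonneg : 0 ≤ Dmax := by
    obtain ⟨i0, hi0⟩ := hTne
    exact (hD_nonneg i0).trans (Finset.le_sup' D hi0)
  have hS_nonneg : 0 ≤ S := by
    obtain ⟨i0, hi0⟩ := hTne
    exact (supNorm_nonneg _).trans (hS_mem i0 hi0)
  have hconst : ∀ (i : ι) (v : EuclideanSpace ℝ (Fin d)),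
      (m' : ℝ)⁻¹ • ∑ _τ ∈ Ti i, v = v := by
    intro i v
    rw [Finset.sum_const, hTi i, ← Nat.cast_smul_eq_nsmul ℝ, smul_smul,
      inv_mul_cancel₀ hm'pos.ne', one_smul]
  have hconstT : ∀ v : EuclideanSpace ℝ (Fin d), (n : ℝ)⁻¹ • ∑ _i ∈ T, v = v := by
    intro v
    rw [Finset.sum_const, hT, ← Nat.cast_smul_eq_nsmul ℝ, smul_smul,
      inv_mul_cancel₀ hnpos.ne', one_smul]
  -- (a) drift of temporal average
  have ha : ∀ i ∈ T, ‖gbar i - (m' : ℝ)⁻¹ • ∑ τ ∈ Ti i, G i τ (x t)‖ ≤ A := by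
    intro i hi
    rw [hgbar i, ← smul_sub, ← Finset.sum_sub_distrib, norm_smul, Real.norm_eq_abs,
      abs_of_pos (inv_pos.mpr hm'pos)]
    have hb : ‖∑ τ ∈ Ti i, (G i τ (x τ) - G i τ (x t))‖ ≤ (m' : ℝ) * (L * (γ * ((m:ℝ)-1))) := by
      calc ‖∑ τ ∈ Ti i, (G i τ (x τ) - G i τ (x t))‖
          ≤ ∑ τ ∈ Ti i, ‖G i τ (x τ) - G i τ (x t)‖ := norm_sum_le _ _
        _ ≤ ∑ _τ ∈ Ti i, (L * (γ * ((m:ℝ)-1))) := by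
            refine Finset.sum_le_sum fun τ hτ => ?_
            exact (hG i hi τ hτ (x τ) (x t)).trans
              (mul_le_mul_of_nonneg_left (hx τ t (Or.inr ⟨i, hi, hτ⟩) (Or.inl rfl)) hL)
        _ = (m':ℝ) * (L * (γ * ((m:ℝ)-1))) := by
            rw [Finset.sum_const, hTi i, nsmul_eq_mul]
    calc (m':ℝ)⁻¹ * ‖∑ τ ∈ Ti i, (G i τ (x τ) - G i τ (x t))‖
        ≤ (m':ℝ)⁻¹ * ((m':ℝ) * (L * (γ * ((m:ℝ)-1)))) :=
          mul_le_mul_of_nonneg_left hb (inv_pos.mpr hm'pos).le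
      _ = A := by rw [hAdef]; field_simp
  -- (b) coordinatewise spread around the temporal mean
  have hb : ∀ i ∈ T, ∀ τ ∈ Ti i, supNorm (G i τ (x τ) - gbar i) ≤ A + D i := by
    intro i hi τ hτ
    have hrw : G i τ (x τ) - gbar i
        = (m':ℝ)⁻¹ • ∑ τ' ∈ Ti i, (G i τ (x τ) - G i τ' (x τ')) := by
      rw [Finset.sum_sub_distrib, smul_sub, ← hgbar i, hconst i (G i τ (x τ))]
    rw [hrw, supNorm_smul, abs_of_pos (inv_pos.mpr hm'pos)]
    have hsum : supNorm (∑ τ' ∈ Ti i, (G i τ (x τ) - G i τ' (x τ')))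
        ≤ ∑ _τ' ∈ Ti i, (A + D i) := by
      refine (supNorm_sum_le _ _).trans (Finset.sum_le_sum fun τ' hτ' => ?_)
      have h1 : supNorm (G i τ (x τ) - G i τ (x τ')) ≤ A := by
        refine (supNorm_le_norm _).trans ((hG i hi τ hτ _ _).trans ?_)
        have hx' := hx τ τ' (Or.inr ⟨i, hi, hτ⟩) (Or.inr ⟨i, hi, hτ'⟩)
        calc L * ‖x τ - x τ'‖ ≤ L * (γ * ((m:ℝ)-1)) :=
              mul_le_mul_of_nonneg_left hx' hL
          _ = A := by rw [hAdef]; ring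
      have h2 : supNorm (G i τ (x τ') - G i τ' (x τ')) ≤ D i := by
        simp only [hDdef]
        exact Finset.le_sup' (fun p => supNorm (G i p.1 (x p.2) - G i p.2 (x p.2)))
          (Finset.mk_mem_product hτ hτ') 
      calc supNorm (G i τ (x τ) - G i τ' (x τ'))
          ≤ supNorm (G i τ (x τ) - G i τ (x τ')) + supNorm (G i τ (x τ') - G i τ' (x τ')) :=
            supNorm_sub_le _ _ _
        _ ≤ A + D i := by linarith
    rw [Finset.sum_const, hTi i, nsmul_eq_mul] at hsum
    calc (m':ℝ)⁻¹ * supNorm (∑ τ' ∈ Ti i, (G i τ (x τ) - G i τ' (x τ')))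
        ≤ (m':ℝ)⁻¹ * ((m':ℝ) * (A + D i)) :=
          mul_le_mul_of_nonneg_left hsum (inv_pos.mpr hm'pos).le
      _ = A + D i := by field_simp
  -- (c) robust temporal estimate error
  have hc : ∀ i ∈ T, ‖ghat i - gbar i‖ ≤ C₁ * (A + D i) := by
    intro i hi
    refine (hghat i hi).trans (mul_le_mul_of_nonneg_left ?_ hC₁)
    exact Finset.sup'_le _ _ fun τ hτ => hb i hi τ hτ
  -- (d) deviation of each robust gradient from gstar (sup norm)
  have hd1 : ∀ i ∈ T, supNorm (ghat i - gstar) ≤ C₁ * (A + Dmax) + A + S := by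
    intro i hi
    have h1 : supNorm (ghat i - gbar i) ≤ C₁ * (A + D i) :=
      (supNorm_le_norm _).trans (hc i hi)
    have h2 : supNorm (gbar i - (m':ℝ)⁻¹ • ∑ τ ∈ Ti i, G i τ (x t)) ≤ A :=
      (supNorm_le_norm _).trans (ha i hi)
    have h3 := hS_mem i hi
    have h4 : C₁ * (A + D i) ≤ C₁ * (A + Dmax) :=
      mul_le_mul_of_nonneg_left (by linarith [hD_le_Dmax i hi]) hC₁
    calc supNorm (ghat i - gstar)
        ≤ supNorm (ghat i - gbar i) + supNorm (gbar i - gstar) := supNorm_sub_le _ _ _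
      _ ≤ supNorm (ghat i - gbar i)
          + (supNorm (gbar i - (m':ℝ)⁻¹ • ∑ τ ∈ Ti i, G i τ (x t))
            + supNorm ((m':ℝ)⁻¹ • ∑ τ ∈ Ti i, G i τ (x t) - gstar)) := by
          have := supNorm_sub_le (gbar i) ((m':ℝ)⁻¹ • ∑ τ ∈ Ti i, G i τ (x t)) gstar
          linarith
      _ ≤ C₁ * (A + Dmax) + A + S := by linarith
  -- deviation of gstar from the aggregate of robust gradients
  have he0 : supNorm (gstar - (n:ℝ)⁻¹ • ∑ j ∈ T, ghat j) ≤ C₁ * (A + Dmax) + A + S := by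
    have hrw : gstar - (n:ℝ)⁻¹ • ∑ j ∈ T, ghat j
        = (n:ℝ)⁻¹ • ∑ j ∈ T, (gstar - ghat j) := by
      rw [Finset.sum_sub_distrib, smul_sub, hconstT gstar]
    rw [hrw, supNorm_smul, abs_of_pos (inv_pos.mpr hnpos)]
    have hsum : supNorm (∑ j ∈ T, (gstar - ghat j))
        ≤ ∑ _j ∈ T, (C₁ * (A + Dmax) + A + S) := by
      refine (supNorm_sum_le _ _).trans (Finset.sum_le_sum fun j hj => ?_)
      rw [supNorm_sub_rev]
      exact hd1 j hj
    rw [Finset.sum_const, hT, nsmul_eq_mul] at hsum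
    calc (n:ℝ)⁻¹ * supNorm (∑ j ∈ T, (gstar - ghat j))
        ≤ (n:ℝ)⁻¹ * ((n:ℝ) * (C₁ * (A + Dmax) + A + S)) :=
          mul_le_mul_of_nonneg_left hsum (inv_pos.mpr hnpos).le
      _ = C₁ * (A + Dmax) + A + S := by field_simp
  -- (e) spread of robust gradients around their aggregate
  have he : ∀ i ∈ T, supNorm (ghat i - (n:ℝ)⁻¹ • ∑ j ∈ T, ghat j)
      ≤ 2 * (C₁ * (A + Dmax) + A + S) := by
    intro i hi
    calc supNorm (ghat i - (n:ℝ)⁻¹ • ∑ j ∈ T, ghat j)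
        ≤ supNorm (ghat i - gstar) + supNorm (gstar - (n:ℝ)⁻¹ • ∑ j ∈ T, ghat j) :=
          supNorm_sub_le _ _ _
      _ ≤ 2 * (C₁ * (A + Dmax) + A + S) := by linarith [hd1 i hi, he0]
  -- (f) robust aggregation error
  have hf : ‖gg - (n:ℝ)⁻¹ • ∑ i ∈ T, ghat i‖ ≤ C₂ * (2 * (C₁ * (A + Dmax) + A + S)) :=
    hgg.trans (mul_le_mul_of_nonneg_left (Finset.sup'_le _ _ he) hC₂)
  -- averaged drift
  have hmid1 : ‖(n:ℝ)⁻¹ • ∑ i ∈ T, ((m':ℝ)⁻¹ • ∑ τ ∈ Ti i, G i τ (x t))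
      - (n:ℝ)⁻¹ • ∑ i ∈ T, gbar i‖ ≤ A := by
    rw [← smul_sub, ← Finset.sum_sub_distrib, norm_smul, Real.norm_eq_abs,
      abs_of_pos (inv_pos.mpr hnpos)]
    have hsum : ‖∑ i ∈ T, ((m':ℝ)⁻¹ • ∑ τ ∈ Ti i, G i τ (x t) - gbar i)‖ ≤ ∑ _i ∈ T, A := by
      refine (norm_sum_le _ _).trans (Finset.sum_le_sum fun i hi => ?_)
      rw [norm_sub_rev]
      exact ha i hi
    rw [Finset.sum_const, hT, nsmul_eq_mul] at hsum
    calc (n:ℝ)⁻¹ * ‖∑ i ∈ T, ((m':ℝ)⁻¹ • ∑ τ ∈ Ti i, G i τ (x t) - gbar i)‖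
        ≤ (n:ℝ)⁻¹ * ((n:ℝ) * A) := mul_le_mul_of_nonneg_left hsum (inv_pos.mpr hnpos).le
      _ = A := by field_simp
  -- averaged robustification error
  have hmid2 : ‖(n:ℝ)⁻¹ • ∑ i ∈ T, gbar i - (n:ℝ)⁻¹ • ∑ i ∈ T, ghat i‖
      ≤ C₁ * A + (C₁ / (n:ℝ)) * ∑ i ∈ T, D i := by
    rw [← smul_sub, ← Finset.sum_sub_distrib, norm_smul, Real.norm_eq_abs,
      abs_of_pos (inv_pos.mpr hnpos)]
    have hsum : ‖∑ i ∈ T, (gbar i - ghat i)‖ ≤ ∑ i ∈ T, (C₁ * (A + D i)) := by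
      refine (norm_sum_le _ _).trans (Finset.sum_le_sum fun i hi => ?_)
      rw [norm_sub_rev]
      exact hc i hi
    have hexp : ∑ i ∈ T, (C₁ * (A + D i)) = (n:ℝ) * (C₁ * A) + C₁ * ∑ i ∈ T, D i := by
      simp only [mul_add, Finset.sum_add_distrib, Finset.sum_const, hT, nsmul_eq_mul,
        Finset.mul_sum]
    rw [hexp] at hsum
    calc (n:ℝ)⁻¹ * ‖∑ i ∈ T, (gbar i - ghat i)‖
        ≤ (n:ℝ)⁻¹ * ((n:ℝ) * (C₁ * A) + C₁ * ∑ i ∈ T, D i) :=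
          mul_le_mul_of_nonneg_left hsum (inv_pos.mpr hnpos).le
      _ = C₁ * A + (C₁ / (n:ℝ)) * ∑ i ∈ T, D i := by field_simp
  -- identity between the two averages
  have hid : (n:ℝ)⁻¹ • ∑ i ∈ T, ((m':ℝ)⁻¹ • ∑ τ ∈ Ti i, G i τ (x t))
      = ((m':ℝ) * (n:ℝ))⁻¹ • ∑ i ∈ T, ∑ τ ∈ Ti i, G i τ (x t) := by
    rw [← Finset.smul_sum, smul_smul,
      show ((m':ℝ) * (n:ℝ))⁻¹ = (n:ℝ)⁻¹ * (m':ℝ)⁻¹ by rw [mul_inv]; ring]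
  -- key bound on ‖gstar - gg‖
  have key : ‖gstar - gg‖ ≤ A * (1 + C₁ + 2 * C₂ * (C₁ + 1))
      + ‖gstar - ((m':ℝ) * (n:ℝ))⁻¹ • ∑ i ∈ T, ∑ τ ∈ Ti i, G i τ (x t)‖
      + 2 * C₂ * S + (C₁ / (n:ℝ)) * ∑ i ∈ T, D i + 2 * C₂ * C₁ * Dmax := by
    have h4 : gstar - gg
        = (gstar - (n:ℝ)⁻¹ • ∑ i ∈ T, ((m':ℝ)⁻¹ • ∑ τ ∈ Ti i, G i τ (x t)))
        + (((n:ℝ)⁻¹ • ∑ i ∈ T, ((m':ℝ)⁻¹ • ∑ τ ∈ Ti i, G i τ (x t)))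
            - (n:ℝ)⁻¹ • ∑ i ∈ T, gbar i)
        + (((n:ℝ)⁻¹ • ∑ i ∈ T, gbar i) - (n:ℝ)⁻¹ • ∑ i ∈ T, ghat i)
        + (((n:ℝ)⁻¹ • ∑ i ∈ T, ghat i) - gg) := by abel
    have tri : ‖gstar - gg‖
        ≤ ‖gstar - (n:ℝ)⁻¹ • ∑ i ∈ T, ((m':ℝ)⁻¹ • ∑ τ ∈ Ti i, G i τ (x t))‖
        + ‖((n:ℝ)⁻¹ • ∑ i ∈ T, ((m':ℝ)⁻¹ • ∑ τ ∈ Ti i, G i τ (x t)))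
            - (n:ℝ)⁻¹ • ∑ i ∈ T, gbar i‖
        + ‖((n:ℝ)⁻¹ • ∑ i ∈ T, gbar i) - (n:ℝ)⁻¹ • ∑ i ∈ T, ghat i‖
        + ‖((n:ℝ)⁻¹ • ∑ i ∈ T, ghat i) - gg‖ := by
      rw [h4]
      exact (norm_add_le _ _).trans (by gcongr; exact norm_add₃_le)
    rw [hid] at tri
    rw [hid] at hmid1
    have hf' : ‖((n:ℝ)⁻¹ • ∑ i ∈ T, ghat i) - gg‖ ≤ C₂ * (2 * (C₁ * (A + Dmax) + A + S)) := by
      rw [norm_sub_rev]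
      exact hf
    calc ‖gstar - gg‖
        ≤ ‖gstar - ((m':ℝ) * (n:ℝ))⁻¹ • ∑ i ∈ T, ∑ τ ∈ Ti i, G i τ (x t)‖
          + A + (C₁ * A + (C₁ / (n:ℝ)) * ∑ i ∈ T, D i)
          + C₂ * (2 * (C₁ * (A + Dmax) + A + S)) := by linarith [tri, hmid1, hmid2, hf']
      _ = A * (1 + C₁ + 2 * C₂ * (C₁ + 1))
          + ‖gstar - ((m':ℝ) * (n:ℝ))⁻¹ • ∑ i ∈ T, ∑ τ ∈ Ti i, G i τ (x t)‖
          + 2 * C₂ * S + (C₁ / (n:ℝ)) * ∑ i ∈ T, D i + 2 * C₂ * C₁ * Dmax := by ring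
  have h2pos : (0:ℝ) ≤ 2 / ‖gstar‖ := by positivity
  calc ‖‖gstar‖⁻¹ • gstar - ‖gg‖⁻¹ • gg‖
      ≤ 2 / ‖gstar‖ * ‖gstar - gg‖ := normalize_sub_le gstar gg hgstar hgg0
    _ ≤ 2 / ‖gstar‖ * (A * (1 + C₁ + 2 * C₂ * (C₁ + 1))
        + ‖gstar - ((m':ℝ) * (n:ℝ))⁻¹ • ∑ i ∈ T, ∑ τ ∈ Ti i, G i τ (x t)‖
        + 2 * C₂ * S + (C₁ / (n:ℝ)) * ∑ i ∈ T, D i + 2 * C₂ * C₁ * Dmax) :=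
      mul_le_mul_of_nonneg_left key h2pos
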